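/- Fix α ∈ ℕ, n ≥ α, and w ∈ D, and suppose that in the sequence a the points a_n = a_{n-1} = … = a_{n-α} = w. Then for every rational function R_n in the set R(n), sup_{|x|=1} | 1/(1 − x·conj(w))^{1+α} − R_n(x) | ≥ (|w|/(1 − |w|²))^{1+α} · |B_{n−α}(w)|. -/

import Mathlib

open Complex MeasureTheory Finset

/-- The unimodular factor `|c|/c`, set to `-1` when `c = 0`. -/
noncomputable def unitFactor (c : ℂ) : ℂ :=
  if c = 0 then -1 else (‖c‖ : ℂ) / c

/-- The Takenaka–Malmquist system generated by the sequence `a`. -/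
noncomputable def TM (a : ℕ → ℂ) (k : ℕ) (z : ℂ) : ℂ :=
  ((Real.sqrt (1 - ‖a k‖ ^ 2) : ℝ) : ℂ) / (1 - (starRingEnd ℂ) (a k) * z) *
    ∏ j ∈ Finset.range k, (-(unitFactor (a j))) * ((z - a j) / (1 - (starRingEnd ℂ) (a j) * z))

/-- The Blaschke product of degree `k` associated with the sequence `a` (with `τ = 1`). -/
noncomputable def Blaschke (a : ℕ → ℂ) (k : ℕ) (z : ℂ) : ℂ :=
  ∏ j ∈ Finset.range k, (z - a j) / (1 - (starRingEnd ℂ) (a j) * z)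

/-- Integral over the unit circle with respect to the normalized Lebesgue measure σ
(complex-valued integrand). -/
noncomputable def circleAvg (f : ℂ → ℂ) : ℂ :=
  (1 / (2 * Real.pi) : ℂ) * ∫ θ in (0:ℝ)..(2 * Real.pi), f (Complex.exp (θ * Complex.I))

/-- Integral over the unit circle with respect to the normalized Lebesgue measure σ
(real-valued integrand). -/
noncomputable def circleAvgR (f : ℂ → ℝ) : ℝ :=
  (1 / (2 * Real.pi)) * ∫ θ in (0:ℝ)..(2 * Real.pi), f (Complex.exp (θ * Complex.I))

/-- The Fourier coefficient `c_m(f)` of `f` in the Takenaka–Malmquist system. -/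
noncomputable def fourierCoef (a : ℕ → ℂ) (f : ℂ → ℂ) (m : ℕ) : ℂ :=
  circleAvg (fun t => f t * (starRingEnd ℂ) (TM a m t))

/-- The weighted Bergman kernel `K_α(z; w) = 1/(1 - z·conj w)^(2+α)`. -/
noncomputable def bergman (α : ℕ) (w z : ℂ) : ℂ :=
  1 / (1 - z * (starRingEnd ℂ) w) ^ (2 + α)

/-- The partial sum `S_{n+1}(K_α)(z; w)` of the Fourier series of `K_α(·; w)` in the
Takenaka–Malmquist system. -/
noncomputable def partialSum (a : ℕ → ℂ) (α : ℕ) (w : ℂ) (n : ℕ) (z : ℂ) : ℂ :=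
  ∑ m ∈ Finset.range (n + 1), fourierCoef a (bergman α w) m * TM a m z

lemma one_sub_ne_zero_of_abs_lt {z : ℂ} (h : ‖z‖ < 1) : 1 - z ≠ 0 := by
  intro h0
  rw [sub_eq_zero] at h0
  rw [← h0] at h
  simp at h

lemma abs_circle_sub {x : ℂ} (hx : ‖x‖ = 1) (z : ℂ) :
    ‖x - z‖ = ‖1 - (starRingEnd ℂ) z * x‖ := by
  have hxx : x * (starRingEnd ℂ) x = 1 := by
    rw [Complex.mul_conj]
    norm_cast
    rw [← Complex.sq_norm, hx]; norm_num
  calc ‖x - z‖ = ‖x * (1 - z * (starRingEnd ℂ) x)‖ := by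
        rw [mul_sub, mul_one, show x * (z * (starRingEnd ℂ) x) = z * (x * (starRingEnd ℂ) x) by ring,
          hxx, mul_one]
    _ = ‖1 - z * (starRingEnd ℂ) x‖ := by rw [norm_mul, hx, one_mul]
    _ = ‖(starRingEnd ℂ) (1 - z * (starRingEnd ℂ) x)‖ := (Complex.norm_conj _).symm
    _ = ‖1 - (starRingEnd ℂ) z * x‖ := by
        rw [map_sub, map_one, map_mul, Complex.conj_conj]

lemma prod_inv_transform1 (b : ℕ → ℂ) {x : ℂ} (hx : x ≠ 0) (s : Finset ℕ) :
    ∏ j ∈ s, (x⁻¹ - b j) = (x⁻¹) ^ s.card * ∏ j ∈ s, (1 - b j * x) := by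
  have hinv : x⁻¹ * x = 1 := inv_mul_cancel₀ hx
  calc ∏ j ∈ s, (x⁻¹ - b j) = ∏ j ∈ s, (x⁻¹ * (1 - b j * x)) := by
        refine Finset.prod_congr rfl fun j _ => ?_
        rw [mul_sub, mul_one, show x⁻¹ * (b j * x) = b j * (x⁻¹ * x) by ring, hinv, mul_one]
    _ = (∏ _j ∈ s, x⁻¹) * ∏ j ∈ s, (1 - b j * x) := Finset.prod_mul_distrib
    _ = (x⁻¹) ^ s.card * ∏ j ∈ s, (1 - b j * x) := by rw [Finset.prod_const]

lemma prod_inv_transform2 (b v : ℕ → ℂ) {x : ℂ} (hx : x ≠ 0) (s : Finset ℕ) :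
    ∏ j ∈ s, (v j * (1 - b j * x⁻¹)) = (x⁻¹) ^ s.card * ∏ j ∈ s, (v j * (x - b j)) := by
  have hinv : x⁻¹ * x = 1 := inv_mul_cancel₀ hx
  calc ∏ j ∈ s, (v j * (1 - b j * x⁻¹)) = ∏ j ∈ s, (x⁻¹ * (v j * (x - b j))) := by
        refine Finset.prod_congr rfl fun j _ => ?_
        have : (1 : ℂ) - b j * x⁻¹ = x⁻¹ * (x - b j) := by
          rw [mul_sub, show x⁻¹ * x = 1 from hinv]; ring
        rw [this]; ring
    _ = (∏ _j ∈ s, x⁻¹) * ∏ j ∈ s, (v j * (x - b j)) := Finset.prod_mul_distrib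
    _ = _ := by rw [Finset.prod_const]

lemma prod_inv_transform3 (b : ℕ → ℂ) {x : ℂ} (hx : x ≠ 0) (s : Finset ℕ) :
    ∏ j ∈ s, (1 - b j * x⁻¹) = (x⁻¹) ^ s.card * ∏ j ∈ s, (x - b j) := by
  have := prod_inv_transform2 b (fun _ => 1) hx s
  simpa using this

noncomputable def auxP (a : ℕ → ℂ) (n : ℕ) (c : ℕ → ℂ) (ζ : ℂ) : ℂ :=
  c 0 * ∏ j ∈ Finset.range n, (ζ - (starRingEnd ℂ) (a j)) +
    ∑ m ∈ Finset.Icc 1 n,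
      c m * ((Real.sqrt (1 - ‖a (m-1)‖ ^ 2) : ℝ) : ℂ) * ζ *
        (∏ j ∈ Finset.range (m-1), (-(unitFactor (a j))) * (1 - a j * ζ)) *
        ∏ j ∈ Finset.Ico m n, (ζ - (starRingEnd ℂ) (a j))

lemma auxP_spec (a : ℕ → ℂ) (n : ℕ) (c : ℕ → ℂ) {x : ℂ} (hx : x ≠ 0)
    (hA : ∀ j, j < n → 1 - (starRingEnd ℂ) (a j) * x ≠ 0) :
    x ^ n * auxP a n c x⁻¹ =
      (c 0 + ∑ m ∈ Finset.Icc 1 n, c m * TM a (m-1) x) *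
        ∏ j ∈ Finset.range n, (1 - (starRingEnd ℂ) (a j) * x) := by
  have hxn : ∀ k : ℕ, x ^ k * (x⁻¹) ^ k = 1 := fun k => by
    rw [← mul_pow, mul_inv_cancel₀ hx, one_pow]
  rw [auxP, mul_add, Finset.mul_sum, add_mul, Finset.sum_mul]
  congr 1
  · rw [prod_inv_transform1 _ hx, Finset.card_range]
    calc x ^ n * (c 0 * ((x⁻¹) ^ n * ∏ j ∈ Finset.range n, (1 - (starRingEnd ℂ) (a j) * x)))
        = (x ^ n * (x⁻¹) ^ n) * (c 0 * ∏ j ∈ Finset.range n, (1 - (starRingEnd ℂ) (a j) * x)) := by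
          ring
      _ = _ := by rw [hxn n, one_mul]
  · refine Finset.sum_congr rfl fun m hm => ?_
    obtain ⟨hm1, hmn⟩ := Finset.mem_Icc.mp hm
    obtain ⟨k, rfl⟩ : ∃ k, m = k + 1 := ⟨m - 1, by omega⟩
    have hkn : k + 1 ≤ n := hmn
    simp only [Nat.add_sub_cancel]
    -- RHS simplification: TM * full product
    have e_tm : TM a k x * ∏ j ∈ Finset.range n, (1 - (starRingEnd ℂ) (a j) * x) =
        ((Real.sqrt (1 - ‖a k‖ ^ 2) : ℝ) : ℂ) *
          (∏ j ∈ Finset.range k, (-(unitFactor (a j))) * (x - a j)) *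
          ∏ j ∈ Finset.Ico (k+1) n, (1 - (starRingEnd ℂ) (a j) * x) := by
      rw [← Finset.prod_range_mul_prod_Ico _ hkn, Finset.prod_range_succ, TM]
      have hsplit : ∏ j ∈ Finset.range k, (-(unitFactor (a j))) * ((x - a j) / (1 - (starRingEnd ℂ) (a j) * x)) =
          (∏ j ∈ Finset.range k, (-(unitFactor (a j))) * (x - a j)) /
            ∏ j ∈ Finset.range k, (1 - (starRingEnd ℂ) (a j) * x) := by
        rw [← Finset.prod_div_distrib]
        exact Finset.prod_congr rfl fun j _ => (mul_div_assoc _ _ _).symm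
      rw [hsplit]
      have h1 : ∏ j ∈ Finset.range k, (1 - (starRingEnd ℂ) (a j) * x) ≠ 0 :=
        Finset.prod_ne_zero_iff.mpr fun j hj => hA j (by
          have := Finset.mem_range.mp hj; omega)
      have h2 : 1 - (starRingEnd ℂ) (a k) * x ≠ 0 := hA k (by omega)
      generalize ∏ j ∈ Finset.range k, (1 - (starRingEnd ℂ) (a j) * x) = P at h1 ⊢
      field_simp
    rw [show c (k+1) * TM a k x * ∏ j ∈ Finset.range n, (1 - (starRingEnd ℂ) (a j) * x)
        = c (k+1) * (TM a k x * ∏ j ∈ Finset.range n, (1 - (starRingEnd ℂ) (a j) * x)) from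
      mul_assoc _ _ _, e_tm]
    rw [prod_inv_transform2 _ _ hx, prod_inv_transform1 _ hx, Finset.card_range, Nat.card_Ico]
    have hpow : x ^ n * (x⁻¹ * ((x⁻¹) ^ k * (x⁻¹) ^ (n - (k+1)))) = 1 := by
      obtain ⟨d, hd⟩ : ∃ d, n - (k+1) = d := ⟨_, rfl⟩
      rw [hd, show n = d + k + 1 by omega, pow_add, pow_add, pow_one]
      calc x ^ d * x ^ k * x * (x⁻¹ * ((x⁻¹) ^ k * (x⁻¹) ^ d))
          = (x * x⁻¹) * (x ^ k * (x⁻¹) ^ k) * (x ^ d * (x⁻¹) ^ d) := by ring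
        _ = 1 := by rw [mul_inv_cancel₀ hx, hxn k, hxn d]; norm_num
    trans ((x ^ n * (x⁻¹ * ((x⁻¹) ^ k * (x⁻¹) ^ (n - (k+1))))) *
          (c (k + 1) * (((Real.sqrt (1 - ‖a k‖ ^ 2) : ℝ) : ℂ) *
            (∏ j ∈ Finset.range k, -unitFactor (a j) * (x - a j)) *
            ∏ j ∈ Finset.Ico (k + 1) n, (1 - (starRingEnd ℂ) (a j) * x))))
    · ring
    · rw [hpow]; ring

noncomputable def auxG (a : ℕ → ℂ) (α n : ℕ) (w : ℂ) (c : ℕ → ℂ) (ζ : ℂ) : ℂ :=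
  (ζ ^ (1+α) * (∏ j ∈ Finset.range (n-α), (ζ - (starRingEnd ℂ) (a j))) -
      auxP a n c ζ * (ζ - (starRingEnd ℂ) w)) /
    ((1 - w * ζ) ^ (1+α) * ∏ j ∈ Finset.range (n-α), (1 - a j * ζ))

lemma auxG_circle (a : ℕ → ℂ) (ha : ∀ k, ‖a k‖ < 1) (α n : ℕ) (hn : α ≤ n)
    (w : ℂ) (hw : ‖w‖ < 1) (haw : ∀ k, n - α ≤ k → k ≤ n → a k = w)
    (c : ℕ → ℂ) (x : ℂ) (hx : ‖x‖ = 1) :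
    ‖auxG a α n w c x⁻¹‖ =
      ‖1 / (1 - x * (starRingEnd ℂ) w) ^ (1 + α) -
        (c 0 + ∑ m ∈ Finset.Icc 1 n, c m * TM a (m - 1) x)‖ := by
  have hx0 : x ≠ 0 := by intro h; rw [h] at hx; simp at hx
  have hxn : ∀ k : ℕ, x ^ k * (x⁻¹) ^ k = 1 := fun k => by
    rw [← mul_pow, mul_inv_cancel₀ hx0, one_pow]
  have hA : ∀ j, 1 - (starRingEnd ℂ) (a j) * x ≠ 0 := fun j => by
    apply one_sub_ne_zero_of_abs_lt
    rw [norm_mul, Complex.norm_conj, hx, mul_one]; exact ha j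
  have hcx : 1 - x * (starRingEnd ℂ) w ≠ 0 := by
    apply one_sub_ne_zero_of_abs_lt
    rw [norm_mul, Complex.norm_conj, hx, one_mul]; exact hw
  have hxw : x - w ≠ 0 := by
    intro h
    have := abs_circle_sub hx w
    rw [h, norm_zero] at this
    exact hcx (by
      have : ‖1 - x * (starRingEnd ℂ) w‖ = 0 := by
        rw [mul_comm] at this; exact this.symm
      exact (norm_eq_zero.mp this))
  have hNx : ∀ j, x - a j ≠ 0 := fun j => by
    intro h
    have h2 := abs_circle_sub hx (a j)
    rw [h, norm_zero] at h2
    exact hA j (norm_eq_zero.mp h2.symm)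
  set cw := (starRingEnd ℂ) w with hcw
  set Rx := c 0 + ∑ m ∈ Finset.Icc 1 n, c m * TM a (m - 1) x with hRx
  set D'x := ∏ j ∈ Finset.range (n-α), (1 - (starRingEnd ℂ) (a j) * x) with hD'x
  set Nx := ∏ j ∈ Finset.range (n-α), (x - a j) with hNxdef
  have hD'ne : D'x ≠ 0 := Finset.prod_ne_zero_iff.mpr fun j _ => hA j
  have hNne : Nx ≠ 0 := Finset.prod_ne_zero_iff.mpr fun j _ => hNx j
  -- split of the full denominator product
  have e7 : ∏ j ∈ Finset.range n, (1 - (starRingEnd ℂ) (a j) * x)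
      = D'x * (1 - cw * x) ^ α := by
    rw [← Finset.prod_range_mul_prod_Ico _ (Nat.sub_le n α), hD'x]
    congr 1
    calc ∏ j ∈ Finset.Ico (n-α) n, (1 - (starRingEnd ℂ) (a j) * x)
        = ∏ _j ∈ Finset.Ico (n-α) n, (1 - cw * x) := by
          refine Finset.prod_congr rfl fun j hj => ?_
          obtain ⟨h1, h2⟩ := Finset.mem_Ico.mp hj
          rw [haw j h1 (le_of_lt h2)]
      _ = (1 - cw * x) ^ α := by
          rw [Finset.prod_const, Nat.card_Ico, Nat.sub_sub_self hn]
  -- numerator and denominator rescaled by x^(n+1)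
  have hnum : x ^ (n+1) *
      ((x⁻¹) ^ (1+α) * (∏ j ∈ Finset.range (n-α), (x⁻¹ - (starRingEnd ℂ) (a j))) -
        auxP a n c x⁻¹ * (x⁻¹ - cw))
      = D'x * (1 - Rx * (1 - cw * x) ^ (1+α)) := by
    rw [prod_inv_transform1 _ hx0, Finset.card_range]
    have e3 : x⁻¹ - cw = x⁻¹ * (1 - cw * x) := by
      rw [mul_sub, mul_one, show x⁻¹ * (cw * x) = cw * (x⁻¹ * x) by ring,
        inv_mul_cancel₀ hx0, mul_one]
    rw [e3, mul_sub]
    have hsp : x ^ (n+1) = x ^ (1+α) * x ^ (n-α) := by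
      rw [← pow_add]; congr 1; omega
    have t1 : x ^ (n+1) * ((x⁻¹) ^ (1+α) * ((x⁻¹) ^ (n-α) * D'x)) = D'x := by
      rw [hsp]
      calc x ^ (1+α) * x ^ (n-α) * ((x⁻¹) ^ (1+α) * ((x⁻¹) ^ (n-α) * D'x))
          = (x ^ (1+α) * (x⁻¹) ^ (1+α)) * (x ^ (n-α) * (x⁻¹) ^ (n-α)) * D'x := by ring
        _ = D'x := by rw [hxn, hxn]; ring
    have t2 : x ^ (n+1) * (auxP a n c x⁻¹ * (x⁻¹ * (1 - cw * x)))
        = Rx * (D'x * (1 - cw * x) ^ α) * (1 - cw * x) := by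
      have := auxP_spec a n c hx0 (fun j _ => hA j)
      calc x ^ (n+1) * (auxP a n c x⁻¹ * (x⁻¹ * (1 - cw * x)))
          = (x ^ n * auxP a n c x⁻¹) * (x * x⁻¹) * (1 - cw * x) := by
            rw [pow_succ]; ring
        _ = Rx * (D'x * (1 - cw * x) ^ α) * (1 - cw * x) := by
            rw [this, mul_inv_cancel₀ hx0, e7, hRx]; ring
    rw [t1, t2]
    rw [show (1:ℕ)+α = α+1 by omega, pow_succ]
    ring
  have hden : x ^ (n+1) * ((1 - w * x⁻¹) ^ (1+α) * ∏ j ∈ Finset.range (n-α), (1 - a j * x⁻¹))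
      = (x - w) ^ (1+α) * Nx := by
    rw [prod_inv_transform3 _ hx0, Finset.card_range]
    have e4 : 1 - w * x⁻¹ = x⁻¹ * (x - w) := by
      rw [mul_sub, show x⁻¹ * x = 1 from inv_mul_cancel₀ hx0]; ring
    rw [e4, mul_pow]
    have hsp : x ^ (n+1) = x ^ (1+α) * x ^ (n-α) := by
      rw [← pow_add]; congr 1; omega
    rw [hsp]
    calc x ^ (1+α) * x ^ (n-α) * ((x⁻¹) ^ (1+α) * (x - w) ^ (1+α) * ((x⁻¹) ^ (n-α) * Nx))
        = (x ^ (1+α) * (x⁻¹) ^ (1+α)) * (x ^ (n-α) * (x⁻¹) ^ (n-α)) * ((x - w) ^ (1+α) * Nx) := by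
          ring
      _ = (x - w) ^ (1+α) * Nx := by rw [hxn, hxn]; ring
  have hGx : auxG a α n w c x⁻¹
      = (D'x * (1 - Rx * (1 - cw * x) ^ (1+α))) / ((x - w) ^ (1+α) * Nx) := by
    rw [auxG, ← hnum, ← hden, mul_div_mul_left _ _ (pow_ne_zero (n+1) hx0)]
  rw [hGx]
  -- now compute absolute values
  have habs1 : ‖x - w‖ = ‖1 - x * cw‖ := by
    rw [abs_circle_sub hx w, mul_comm]
  have habs2 : ‖Nx‖ = ‖D'x‖ := by
    rw [hNxdef, hD'x, norm_prod, norm_prod]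
    exact Finset.prod_congr rfl fun j _ => abs_circle_sub hx (a j)
  have hre : 1 / (1 - x * cw) ^ (1+α) - Rx
      = (1 - Rx * (1 - cw * x) ^ (1+α)) / (1 - x * cw) ^ (1+α) := by
    rw [mul_comm cw x]
    field_simp
  rw [hre, norm_div, norm_div, norm_mul, norm_mul, norm_pow, norm_pow, habs1, habs2]
  have hdne : ‖D'x‖ ≠ 0 := norm_ne_zero_iff.mpr hD'ne
  have hbne : ‖1 - x * cw‖ ≠ 0 := norm_ne_zero_iff.mpr hcx
  field_simp

lemma auxG_at (a : ℕ → ℂ) (ha : ∀ k, ‖a k‖ < 1) (α n : ℕ)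
    (w : ℂ) (hw : ‖w‖ < 1) (c : ℕ → ℂ) :
    ‖auxG a α n w c ((starRingEnd ℂ) w)‖ =
      (‖w‖ / (1 - ‖w‖ ^ 2)) ^ (1 + α) *
        ‖Blaschke a (n - α) w‖ := by
  set cw := (starRingEnd ℂ) w with hcw
  have hG : auxG a α n w c cw =
      (cw ^ (1+α) * ∏ j ∈ Finset.range (n-α), (cw - (starRingEnd ℂ) (a j))) /
        ((1 - w * cw) ^ (1+α) * ∏ j ∈ Finset.range (n-α), (1 - a j * cw)) := by
    rw [auxG, sub_self, mul_zero, sub_zero]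
  have ht : (0:ℝ) < 1 - ‖w‖ ^ 2 := by nlinarith [norm_nonneg w]
  have habs_wcw : ‖1 - w * cw‖ = 1 - ‖w‖ ^ 2 := by
    rw [hcw, Complex.mul_conj, ← Complex.sq_norm]
    rw [show (1 : ℂ) - ((‖w‖ ^ 2 : ℝ) : ℂ) = (((1 - ‖w‖ ^ 2 : ℝ)) : ℂ) by
      push_cast; ring]
    rw [Complex.norm_real, Real.norm_eq_abs, abs_of_pos ht]
  have hq : ∀ j, ‖1 - (starRingEnd ℂ) (a j) * w‖ ≠ 0 := fun j => by
    apply norm_ne_zero_iff.mpr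
    apply one_sub_ne_zero_of_abs_lt
    rw [norm_mul, Complex.norm_conj]
    calc ‖a j‖ * ‖w‖ ≤ ‖a j‖ * 1 := by
          exact mul_le_mul_of_nonneg_left hw.le (norm_nonneg _)
      _ < 1 := by rw [mul_one]; exact ha j
  have hp1 : ∀ j, ‖cw - (starRingEnd ℂ) (a j)‖ = ‖w - a j‖ := fun j => by
    rw [hcw, ← map_sub, Complex.norm_conj]
  have hp2 : ∀ j, ‖1 - a j * cw‖ = ‖1 - (starRingEnd ℂ) (a j) * w‖ :=
    fun j => by
      rw [show (1:ℂ) - a j * cw = (starRingEnd ℂ) (1 - (starRingEnd ℂ) (a j) * w) by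
        rw [map_sub, map_one, map_mul, Complex.conj_conj], Complex.norm_conj]
  have hB : ‖Blaschke a (n-α) w‖ =
      (∏ j ∈ Finset.range (n-α), ‖w - a j‖) /
        ∏ j ∈ Finset.range (n-α), ‖1 - (starRingEnd ℂ) (a j) * w‖ := by
    rw [Blaschke, norm_prod, ← Finset.prod_div_distrib]
    exact Finset.prod_congr rfl fun j _ => norm_div _ _
  rw [hG, norm_div, norm_mul, norm_mul, norm_pow, norm_pow, habs_wcw, norm_prod, norm_prod, hB]
  rw [Finset.prod_congr rfl fun j _ => hp1 j, Finset.prod_congr rfl fun j _ => hp2 j]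
  rw [hcw, Complex.norm_conj, div_pow]
  have hQ : ∏ j ∈ Finset.range (n-α), ‖1 - (starRingEnd ℂ) (a j) * w‖ ≠ 0 :=
    Finset.prod_ne_zero_iff.mpr fun j _ => hq j
  field_simp

lemma auxG_diff (a : ℕ → ℂ) (ha : ∀ k, ‖a k‖ < 1) (α n : ℕ)
    (w : ℂ) (hw : ‖w‖ < 1) (c : ℕ → ℂ) :
    DiffContOnCl ℂ (auxG a α n w c) (Metric.ball (0:ℂ) 1) := by
  apply DifferentiableOn.diffContOnCl
  rw [closure_ball (0:ℂ) one_ne_zero]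
  have hP : Differentiable ℂ (auxP a n c) := by
    unfold auxP
    fun_prop
  have hnum : Differentiable ℂ (fun ζ : ℂ =>
      ζ ^ (1+α) * (∏ j ∈ Finset.range (n-α), (ζ - (starRingEnd ℂ) (a j))) -
        auxP a n c ζ * (ζ - (starRingEnd ℂ) w)) := by
    fun_prop
  have hden : Differentiable ℂ (fun ζ : ℂ =>
      (1 - w * ζ) ^ (1+α) * ∏ j ∈ Finset.range (n-α), (1 - a j * ζ)) := by
    fun_prop
  refine DifferentiableOn.div hnum.differentiableOn hden.differentiableOn ?_
  intro ζ hζ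
  have hζ1 : ‖ζ‖ ≤ 1 := by
    simpa [Complex.dist_eq] using Metric.mem_closedBall.mp hζ
  apply mul_ne_zero
  · apply pow_ne_zero
    apply one_sub_ne_zero_of_abs_lt
    rw [norm_mul]
    calc ‖w‖ * ‖ζ‖ ≤ ‖w‖ * 1 :=
          mul_le_mul_of_nonneg_left hζ1 (norm_nonneg _)
      _ < 1 := by rw [mul_one]; exact hw
  · refine Finset.prod_ne_zero_iff.mpr fun j _ => ?_
    apply one_sub_ne_zero_of_abs_lt
    rw [norm_mul]
    calc ‖a j‖ * ‖ζ‖ ≤ ‖a j‖ * 1 :=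
          mul_le_mul_of_nonneg_left hζ1 (norm_nonneg _)
      _ < 1 := by rw [mul_one]; exact ha j

/-- uniform lower bound: if `a_n = a_{n-1} = … = a_{n-α} = w ∈ D`, then
for every rational function `R_n(x) = c_0 + ∑_{m=1}^{n} c_m·φ_{m−1}(x)` in the class `R(n)`,
`sup_{|x|=1} |1/(1 − x·conj(w))^{1+α} − R_n(x)| ≥ (|w|/(1−|w|²))^{1+α}·|B_{n−α}(w)|`. -/
theorem uniform_lower_bound (a : ℕ → ℂ) (ha : ∀ k, ‖a k‖ < 1)
    (α : ℕ) (n : ℕ) (hn : α ≤ n) (w : ℂ) (hw : ‖w‖ < 1)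
    (haw : ∀ k, n - α ≤ k → k ≤ n → a k = w)
    (c : ℕ → ℂ) :
    sSup ((fun x => ‖1 / (1 - x * (starRingEnd ℂ) w) ^ (1 + α) -
        (c 0 + ∑ m ∈ Finset.Icc 1 n, c m * TM a (m - 1) x)‖) '' Metric.sphere (0:ℂ) 1) ≥
      (‖w‖ / (1 - ‖w‖ ^ 2)) ^ (1 + α) *
        ‖Blaschke a (n - α) w‖ := by
  set Eabs : ℂ → ℝ := fun x => ‖1 / (1 - x * (starRingEnd ℂ) w) ^ (1 + α) -
      (c 0 + ∑ m ∈ Finset.Icc 1 n, c m * TM a (m - 1) x)‖ with hE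
  have hdiff := auxG_diff a ha α n w hw c
  have hsphmem : ∀ x : ℂ, x ∈ Metric.sphere (0:ℂ) 1 → ‖x‖ = 1 := fun x hx => by
    simpa [Complex.dist_eq] using Metric.mem_sphere.mp hx
  have hsphmem' : ∀ x : ℂ, ‖x‖ = 1 → x ∈ Metric.sphere (0:ℂ) 1 := fun x hx => by
    simp [Metric.mem_sphere, Complex.dist_eq, hx]
  have hcont : ContinuousOn (fun ζ => ‖auxG a α n w c ζ‖)
      (Metric.sphere (0:ℂ) 1) := by
    apply continuous_norm.comp_continuousOn
    apply hdiff.continuousOn.mono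
    rw [closure_ball (0:ℂ) one_ne_zero]
    exact Metric.sphere_subset_closedBall
  have hcomp : IsCompact ((fun ζ => ‖auxG a α n w c ζ‖) '' Metric.sphere (0:ℂ) 1) :=
    (isCompact_sphere (0:ℂ) 1).image_of_continuousOn hcont
  have hsub : Eabs '' Metric.sphere (0:ℂ) 1 ⊆
      (fun ζ => ‖auxG a α n w c ζ‖) '' Metric.sphere (0:ℂ) 1 := by
    rintro y ⟨x, hxs, rfl⟩
    have hx1 : ‖x‖ = 1 := hsphmem x hxs
    have hxi : ‖x⁻¹‖ = 1 := by rw [norm_inv, hx1]; norm_num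
    exact ⟨x⁻¹, hsphmem' _ hxi, auxG_circle a ha α n hn w hw haw c x hx1⟩
  have hbdd : BddAbove (Eabs '' Metric.sphere (0:ℂ) 1) := hcomp.bddAbove.mono hsub
  have hfr : ∀ ζ ∈ frontier (Metric.ball (0:ℂ) 1),
      ‖auxG a α n w c ζ‖ ≤ sSup (Eabs '' Metric.sphere (0:ℂ) 1) := by
    intro ζ hζ
    rw [frontier_ball (0:ℂ) one_ne_zero] at hζ
    have hζ1 : ‖ζ‖ = 1 := hsphmem ζ hζ
    have hζi : ‖ζ⁻¹‖ = 1 := by rw [norm_inv, hζ1]; norm_num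
    have hcirc := auxG_circle a ha α n hn w hw haw c ζ⁻¹ hζi
    rw [inv_inv] at hcirc
    rw [hcirc]
    exact le_csSup hbdd ⟨ζ⁻¹, hsphmem' _ hζi, rfl⟩
  have hmem : (starRingEnd ℂ) w ∈ closure (Metric.ball (0:ℂ) 1) := by
    rw [closure_ball (0:ℂ) one_ne_zero]
    rw [Metric.mem_closedBall, Complex.dist_eq, sub_zero, Complex.norm_conj]
    exact hw.le
  have hfin := Complex.norm_le_of_forall_mem_frontier_norm_le Metric.isBounded_ball hdiff hfr hmem
  rw [auxG_at a ha α n w hw c] at hfin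
  exact hfin
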